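/- Let G = (S, r) be a ranked set with |S| = n and rank r = r(S) < n, and let T(G; x, y) = ∑ b_{i,j} x^i y^j be its Tutte polynomial. Then ∑_{i=0}^{r} ∑_{j=0}^{r−i} (−1)^j C(r−i, j) b_{i,j} = 0. -/

import Mathlib

open Finset

variable {α : Type*} [DecidableEq α]

/-- The generalized Tutte polynomial of a ranked set (S, r), as a polynomial
in x over polynomials in y; the coefficient b_{i,j} of x^i y^j is
((tutte S r).coeff i).coeff j. -/
noncomputable def tutte (S : Finset α) (r : Finset α → ℤ) : Polynomial (Polynomial ℤ) :=
  ∑ A ∈ S.powerset, (Polynomial.X - 1) ^ (r S - r A).toNat *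
    (Polynomial.C Polynomial.X - 1) ^ ((A.card : ℤ) - r A).toNat

/-- Signed binomial coefficient: the coefficient of X^i in (X-1)^m. -/
def ccAux (m i : ℕ) : ℤ := (-1) ^ (m - i) * (m.choose i)

lemma ccAux_eq (m i : ℕ) : ccAux m i = (-1) ^ m * ((-1) ^ i * (m.choose i)) := by
  unfold ccAux
  rcases le_or_gt i m with h | h
  · have hm : (-1 : ℤ) ^ m = (-1) ^ (m - i) * (-1) ^ i := by rw [← pow_add]; congr 1; omega
    have sq : (-1 : ℤ) ^ i * (-1) ^ i = 1 := by
      rw [← pow_add, ← two_mul, pow_mul]; norm_num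
    rw [hm]
    linear_combination (-(m.choose i : ℤ) * (-1 : ℤ) ^ (m - i)) * sq
  · rw [Nat.choose_eq_zero_of_lt h]; push_cast; ring

lemma coeff_Xsub1 (m i : ℕ) :
    ((Polynomial.X - 1 : Polynomial ℤ) ^ m).coeff i = ccAux m i := by
  have h : (Polynomial.X - 1 : Polynomial ℤ) = Polynomial.X + Polynomial.C (-1) := by
    simp [sub_eq_add_neg]
  rw [h, Polynomial.coeff_X_add_C_pow]; rfl

lemma term_coeff (m n i j : ℕ) :
    ((((Polynomial.X - 1) ^ m * (Polynomial.C Polynomial.X - 1) ^ n :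
        Polynomial (Polynomial ℤ))).coeff i).coeff j = ccAux m i * ccAux n j := by
  have h1 : ((Polynomial.C Polynomial.X - 1 : Polynomial (Polynomial ℤ))) ^ n
      = Polynomial.C ((Polynomial.X - 1 : Polynomial ℤ) ^ n) := by
    rw [map_pow, map_sub, map_one]
  rw [h1, Polynomial.coeff_mul_C]
  have h2 : ((Polynomial.X - 1 : Polynomial (Polynomial ℤ)) ^ m).coeff i
      = Polynomial.C (ccAux m i) := by
    have h3 : (Polynomial.X - 1 : Polynomial (Polynomial ℤ))
        = Polynomial.map (Polynomial.C : ℤ →+* Polynomial ℤ) (Polynomial.X - 1) := by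
      simp
    rw [h3, ← Polynomial.map_pow, Polynomial.coeff_map, coeff_Xsub1]
  rw [h2, Polynomial.coeff_C_mul, coeff_Xsub1]

omit [DecidableEq α] in
lemma tutte_coeff (S : Finset α) (r : Finset α → ℤ) (i j : ℕ) :
    ((tutte S r).coeff i).coeff j
      = ∑ A ∈ S.powerset, ccAux (r S - r A).toNat i * ccAux ((A.card : ℤ) - r A).toNat j := by
  unfold tutte
  rw [Polynomial.finset_sum_coeff, Polynomial.finset_sum_coeff]
  exact Finset.sum_congr rfl fun A _ => term_coeff _ _ _ _

lemma vandAux (k n : ℕ) :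
    ∑ j ∈ Finset.range (k + 1), (k.choose j) * (n.choose j) = (k + n).choose n := by
  rw [Nat.add_choose_eq k n n, Finset.Nat.sum_antidiagonal_eq_sum_range_succ_mk]
  have h1 : ∑ j ∈ Finset.range (n + 1), k.choose (j, n - j).1 * n.choose (j, n - j).2
      = ∑ j ∈ Finset.range (n + 1), k.choose j * n.choose j := by
    refine Finset.sum_congr rfl fun j hj => ?_
    simp only [Finset.mem_range] at hj
    rw [Nat.choose_symm (by omega)]
  rw [h1]
  have e1 : ∑ j ∈ Finset.range (k + 1), k.choose j * n.choose j
      = ∑ j ∈ Finset.range (k + n + 1), k.choose j * n.choose j := by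
    refine Finset.sum_subset (Finset.range_subset_range.2 (by omega)) fun j _ hj => ?_
    simp only [Finset.mem_range, not_lt] at hj
    rw [Nat.choose_eq_zero_of_lt (by omega), zero_mul]
  have e2 : ∑ j ∈ Finset.range (n + 1), k.choose j * n.choose j
      = ∑ j ∈ Finset.range (k + n + 1), k.choose j * n.choose j := by
    refine Finset.sum_subset (Finset.range_subset_range.2 (by omega)) fun j _ hj => ?_
    simp only [Finset.mem_range, not_lt] at hj
    rw [Nat.choose_eq_zero_of_lt (show n < j by omega), mul_zero]
  rw [e1, ← e2]

lemma L4Aux (k n : ℕ) :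
    ∑ j ∈ Finset.range (k + 1), (-1 : ℤ) ^ j * (k.choose j) * ccAux n j
      = (-1) ^ n * ((k + n).choose n : ℤ) := by
  have h : ∀ j ∈ Finset.range (k + 1), (-1 : ℤ) ^ j * (k.choose j) * ccAux n j
      = (-1) ^ n * ((k.choose j) * (n.choose j) : ℕ) := by
    intro j _
    unfold ccAux
    rcases le_or_gt j n with h | h
    · push_cast
      have h2 : (-1 : ℤ) ^ j * (-1) ^ (n - j) = (-1) ^ n := by
        rw [← pow_add]; congr 1; omega
      linear_combination ((k.choose j : ℤ) * (n.choose j)) * h2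
    · rw [Nat.choose_eq_zero_of_lt h]; push_cast; ring
  rw [Finset.sum_congr rfl h, ← Finset.mul_sum, ← Nat.cast_sum, vandAux k n]

lemma L5Aux (n : ℕ) : ∀ (m r : ℕ), m ≤ r + n →
    ∑ i ∈ Finset.range (r + 1), (-1 : ℤ) ^ i * (m.choose i) * (((r - i) + n).choose n)
      = (((r + n) - m).choose r : ℤ) := by
  intro m
  induction m with
  | zero =>
    intro r _
    have h : ∀ i ∈ Finset.range (r + 1), (-1 : ℤ) ^ i * ((0:ℕ).choose i) * (((r - i) + n).choose n)
        = if i = 0 then ((r + n).choose n : ℤ) else 0 := by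
      intro i _
      rcases i with _ | i
      · simp
      · simp [Nat.choose_eq_zero_of_lt (Nat.succ_pos i)]
    rw [Finset.sum_congr rfl h, Finset.sum_ite_eq' _ 0]
    simp [Nat.choose_symm_add]
  | succ m ih =>
    intro r hr
    have peel : ∀ M : ℕ, ∑ i ∈ Finset.range (r + 1), (-1 : ℤ) ^ i * (M.choose i) * (((r - i) + n).choose n)
        = (((r + n).choose n : ℤ)) + ∑ i ∈ Finset.range r, (-1 : ℤ) ^ (i+1) * (M.choose (i+1)) * (((r - (i+1)) + n).choose n) := by
      intro M
      rw [Finset.sum_range_succ' (fun i => (-1 : ℤ) ^ i * (M.choose i) * (((r - i) + n).choose n)) r]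
      simp [add_comm]
    rcases r with _ | r
    · simp only [Finset.range_one, Finset.sum_singleton, pow_zero, Nat.choose_zero_right,
        Nat.cast_one, one_mul, Nat.sub_zero, Nat.zero_add]
      simp
    · rw [peel]
      have step : ∑ i ∈ Finset.range (r+1), (-1 : ℤ) ^ (i+1) * ((m+1).choose (i+1)) * (((r + 1 - (i+1)) + n).choose n)
          = ∑ i ∈ Finset.range (r+1), ((-1 : ℤ) ^ (i+1) * (m.choose (i+1)) * (((r - i) + n).choose n)
            - (-1 : ℤ) ^ i * (m.choose i) * (((r - i) + n).choose n)) := by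
        refine Finset.sum_congr rfl fun i _ => ?_
        rw [Nat.choose_succ_succ]
        have h4 : r + 1 - (i+1) = r - i := by omega
        rw [h4]
        push_cast
        ring
      rw [step, Finset.sum_sub_distrib]
      have e1 : (((r + 1 + n).choose n : ℤ)) + ∑ i ∈ Finset.range (r+1), (-1 : ℤ) ^ (i+1) * (m.choose (i+1)) * (((r - i) + n).choose n)
          = ∑ i ∈ Finset.range (r + 1 + 1), (-1 : ℤ) ^ i * (m.choose i) * (((r + 1 - i) + n).choose n) := by
        rw [peel]
        congr 1
        refine Finset.sum_congr rfl fun i _ => ?_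
        have h5 : r + 1 - (i+1) = r - i := by omega
        rw [h5]
      have ihr1 := ih (r + 1) (by omega)
      have ihr := ih r (by omega)
      have cast1 : (((r + 1 + n) - m).choose (r+1) : ℤ) = (((r + n) - m + 1).choose (r+1) : ℤ) := by
        congr 2; omega
      have pascal : ((r + n) - m + 1).choose (r+1) = ((r+n) - m).choose r + ((r+n)-m).choose (r+1) := Nat.choose_succ_succ _ _
      have goalcast : (((r + 1 + n) - (m+1)).choose (r+1) : ℤ) = ((((r+n) - m)).choose (r+1) : ℤ) := by
        congr 2; omega
      calc (((r + 1 + n).choose n : ℤ)) + (∑ i ∈ Finset.range (r+1), (-1 : ℤ) ^ (i+1) * (m.choose (i+1)) * (((r - i) + n).choose n)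
            - ∑ i ∈ Finset.range (r+1), (-1 : ℤ) ^ i * (m.choose i) * (((r - i) + n).choose n))
          = (∑ i ∈ Finset.range (r + 1 + 1), (-1 : ℤ) ^ i * (m.choose i) * (((r + 1 - i) + n).choose n))
            - ∑ i ∈ Finset.range (r+1), (-1 : ℤ) ^ i * (m.choose i) * (((r - i) + n).choose n) := by
            rw [← e1]; ring
        _ = (((r + 1 + n) - m).choose (r+1) : ℤ) - (((r + n) - m).choose r : ℤ) := by rw [ihr1, ihr]
        _ = (((r + 1 + n) - (m+1)).choose (r+1) : ℤ) := by
            rw [cast1, goalcast]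
            push_cast [pascal]
            ring

lemma perA (R m n : ℕ) (hmn : m ≤ R + n) :
    ∑ i ∈ Finset.range (R+1), ∑ j ∈ Finset.range (R - i + 1),
        (-1 : ℤ) ^ j * ((R-i).choose j) * (ccAux m i * ccAux n j)
      = (-1) ^ (m+n) * ((((R+n) - m).choose R : ℕ) : ℤ) := by
  have step1 : ∀ i ∈ Finset.range (R+1), ∑ j ∈ Finset.range (R - i + 1),
        (-1 : ℤ) ^ j * ((R-i).choose j) * (ccAux m i * ccAux n j)
      = ccAux m i * ((-1) ^ n * ((((R-i)+n).choose n : ℕ) : ℤ)) := by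
    intro i _
    rw [← L4Aux (R-i) n, Finset.mul_sum]
    exact Finset.sum_congr rfl fun j _ => by ring
  rw [Finset.sum_congr rfl step1]
  have step2 : ∀ i ∈ Finset.range (R+1), ccAux m i * ((-1) ^ n * ((((R-i)+n).choose n : ℕ) : ℤ))
      = ((-1 : ℤ) ^ (m+n)) * ((-1) ^ i * (m.choose i) * ((((R-i)+n).choose n : ℕ) : ℤ)) := by
    intro i _
    rw [ccAux_eq, pow_add]
    ring
  rw [Finset.sum_congr rfl step2, ← Finset.mul_sum]
  congr 1
  exact L5Aux n m R hmn

lemma final_sum (N R : ℕ) (h : R < N) :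
    ∑ j ∈ Finset.range (N + 1), ((N.choose j : ℤ)) * ((-1) ^ (j + R) * (j.choose R)) = 0 := by
  have hsub : Finset.Ico R (N + 1) ⊆ Finset.range (N + 1) := by
    rw [Finset.range_eq_Ico]; exact Finset.Ico_subset_Ico (Nat.zero_le R) le_rfl
  rw [← Finset.sum_subset hsub (fun j hjm hj => by
    simp only [Finset.mem_range] at hjm
    simp only [Finset.mem_Ico, not_and, not_lt] at hj
    have hlt : j < R := by omega
    rw [Nat.choose_eq_zero_of_lt hlt]; push_cast; ring)]
  rw [Finset.sum_Ico_eq_sum_range]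
  have hN : N + 1 - R = (N - R) + 1 := by omega
  rw [hN]
  have h6 : ∀ d ∈ Finset.range ((N - R) + 1),
      ((N.choose (R + d) : ℤ)) * ((-1) ^ (R + d + R) * ((R + d).choose R))
        = (N.choose R : ℤ) * ((-1) ^ d * ((N - R).choose d)) := by
    intro d hd
    simp only [Finset.mem_range] at hd
    have hkn : R + d ≤ N := by omega
    have hmul := @Nat.choose_mul N (R + d) R (Nat.le_add_right R d)
    have hd2 : R + d - R = d := by omega
    rw [hd2] at hmul
    have hsign : (-1 : ℤ) ^ (R + d + R) = (-1) ^ d := by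
      have h7 : R + d + R = d + 2 * R := by omega
      rw [h7, pow_add, pow_mul]; norm_num
    rw [hsign]
    have hc := congrArg (Nat.cast : ℕ → ℤ) hmul
    push_cast at hc
    linear_combination (-1 : ℤ) ^ d * hc
  rw [Finset.sum_congr rfl h6, ← Finset.mul_sum]
  rw [Int.alternating_sum_range_choose_of_ne (show N - R ≠ 0 by omega), mul_zero]

/-- The k = r(S) < n case: ∑_{i=0}^{r} ∑_{j=0}^{r-i} (-1)^j C(r-i,j) b_{i,j} = 0. -/
theorem stmt11 (S : Finset α) (r : Finset α → ℤ)
    (h0 : r ∅ = 0) (h1 : ∀ A ⊆ S, r A ≤ r S) (h2 : ∀ A ⊆ S, r A ≤ (A.card : ℤ))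
    (hrn : r S < (S.card : ℤ)) :
    ∑ i ∈ Finset.range ((r S).toNat + 1), ∑ j ∈ Finset.range ((r S).toNat - i + 1),
      (-1 : ℤ) ^ j * (((r S).toNat - i).choose j : ℤ) *
        (((tutte S r).coeff i).coeff j) = 0 := by
  have hr0 : 0 ≤ r S := h0 ▸ h1 ∅ (Finset.empty_subset S)
  set R := (r S).toNat with hRdef
  have hR : (R : ℤ) = r S := Int.toNat_of_nonneg hr0
  simp_rw [tutte_coeff, Finset.mul_sum]
  have sw1 : ∀ i ∈ Finset.range (R + 1), ∑ j ∈ Finset.range (R - i + 1), ∑ A ∈ S.powerset,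
        (-1 : ℤ) ^ j * ((R - i).choose j : ℤ) *
          (ccAux (r S - r A).toNat i * ccAux ((A.card : ℤ) - r A).toNat j)
      = ∑ A ∈ S.powerset, ∑ j ∈ Finset.range (R - i + 1),
        (-1 : ℤ) ^ j * ((R - i).choose j : ℤ) *
          (ccAux (r S - r A).toNat i * ccAux ((A.card : ℤ) - r A).toNat j) :=
    fun i _ => Finset.sum_comm
  rw [Finset.sum_congr rfl sw1, Finset.sum_comm]
  have perA' : ∀ A ∈ S.powerset, ∑ i ∈ Finset.range (R + 1), ∑ j ∈ Finset.range (R - i + 1),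
        (-1 : ℤ) ^ j * ((R - i).choose j : ℤ) *
          (ccAux (r S - r A).toNat i * ccAux ((A.card : ℤ) - r A).toNat j)
      = (-1) ^ (A.card + R) * ((A.card.choose R : ℕ) : ℤ) := by
    intro A hA
    have hAS : A ⊆ S := Finset.mem_powerset.1 hA
    set m := (r S - r A).toNat with hmdef
    set n := ((A.card : ℤ) - r A).toNat with hndef
    have hm : (m : ℤ) = r S - r A := Int.toNat_of_nonneg (by have := h1 A hAS; omega)
    have hn : (n : ℤ) = (A.card : ℤ) - r A := Int.toNat_of_nonneg (by have := h2 A hAS; omega)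
    have hmn : m ≤ R + n := by omega
    rw [perA R m n hmn]
    have hcard : (R + n) - m = A.card := by omega
    rw [hcard]
    congr 1
    -- parity
    have hev : Even (((m + n) + (A.card + R) : ℕ) : ℤ) := by
      refine ⟨(R : ℤ) + A.card - r A, ?_⟩
      push_cast
      omega
    rw [Int.even_coe_nat] at hev
    have h1' : (-1 : ℤ) ^ ((m + n) + (A.card + R)) = 1 := Even.neg_one_pow hev
    rw [pow_add] at h1'
    have sq : (-1 : ℤ) ^ (A.card + R) * (-1) ^ (A.card + R) = 1 := by
      rw [← pow_add, ← two_mul, pow_mul]; norm_num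
    linear_combination ((-1 : ℤ) ^ (A.card + R)) * h1' - ((-1 : ℤ) ^ (m + n)) * sq
  rw [Finset.sum_congr rfl perA']
  rw [Finset.sum_powerset]
  have inner : ∀ j ∈ Finset.range (S.card + 1),
      ∑ A ∈ Finset.powersetCard j S, (-1 : ℤ) ^ (A.card + R) * ((A.card.choose R : ℕ) : ℤ)
        = (S.card.choose j : ℤ) * ((-1) ^ (j + R) * ((j.choose R : ℕ) : ℤ)) := by
    intro j _
    rw [Finset.sum_powersetCard j S (fun c => (-1 : ℤ) ^ (c + R) * ((c.choose R : ℕ) : ℤ))]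
    rw [nsmul_eq_mul]
  rw [Finset.sum_congr rfl inner]
  exact final_sum S.card R (by omega)
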